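/- For all p, q ∈ ℝⁿ and ω ∈ S^{n−1}, the Glassey–Strauss post-collisional momenta satisfy p′⁰ = p⁰ + N⁰ and q′⁰ = q⁰ − N⁰, i.e. √(c² + |p + aω|²) = p⁰ + N⁰ and √(c² + |q − aω|²) = q⁰ − N⁰. In particular the collisional conservation laws hold: p′ + q′ = p + q and p′⁰ + q′⁰ = p⁰ + q⁰. -/

import Mathlib

noncomputable section

open MeasureTheory Metric Matrix

namespace RelBoltz

/-- The energy `p⁰ = √(c² + |p|²)` of a relativistic particle with momentum `p ∈ ℝⁿ`. -/
def energy (n : ℕ) (c : ℝ) (p : EuclideanSpace ℝ (Fin n)) : ℝ :=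
  Real.sqrt (c ^ 2 + ‖p‖ ^ 2)

/-- The Euclidean dot product on `ℝⁿ`. -/
def dot (n : ℕ) (p q : EuclideanSpace ℝ (Fin n)) : ℝ := ∑ i, p i * q i

/-- The relative momentum `ϱ(p,q) = √(2(p⁰q⁰ − p·q − c²))`. -/
def relMom (n : ℕ) (c : ℝ) (p q : EuclideanSpace ℝ (Fin n)) : ℝ :=
  Real.sqrt (2 * (energy n c p * energy n c q - dot n p q - c ^ 2))

/-- The quantity `s(p,q) = 2(p⁰q⁰ − p·q + c²)`. -/
def sQ (n : ℕ) (c : ℝ) (p q : EuclideanSpace ℝ (Fin n)) : ℝ :=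
  2 * (energy n c p * energy n c q - dot n p q + c ^ 2)

/-- The Minkowski metric `g = diag(−1, 1, …, 1)` as a `(1+n)×(1+n)` matrix. -/
def eta (n : ℕ) : Matrix (Fin (n + 1)) (Fin (n + 1)) ℝ :=
  Matrix.diagonal fun μ => if μ = 0 then -1 else 1

/-- A proper Lorentz transformation: `det Λ = 1` and `Λᵀ g Λ = g`. -/
def IsLorentz (n : ℕ) (Λ : Matrix (Fin (n + 1)) (Fin (n + 1)) ℝ) : Prop :=
  Λ.det = 1 ∧ Λᵀ * eta n * Λ = eta n

/-- The four-vector `p^μ = (p⁰, p) ∈ ℝ^{1+n}`. -/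
def fourVec (n : ℕ) (c : ℝ) (p : EuclideanSpace ℝ (Fin n)) : Fin (n + 1) → ℝ :=
  Fin.cons (energy n c p) fun i => p i

/-- Condition (CM): `Λ^μ_ν (p^ν + q^ν) = (√s, 0, …, 0)`. -/
def CM (n : ℕ) (c : ℝ) (Λ : Matrix (Fin (n + 1)) (Fin (n + 1)) ℝ)
    (p q : EuclideanSpace ℝ (Fin n)) : Prop :=
  Λ.mulVec (fourVec n c p + fourVec n c q) = Fin.cons (Real.sqrt (sQ n c p q)) (fun _ => (0 : ℝ))

/-- The candidate inverse `g Λᵀ g` of a Lorentz transformation. -/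
def Linv (n : ℕ) (Λ : Matrix (Fin (n + 1)) (Fin (n + 1)) ℝ) :
    Matrix (Fin (n + 1)) (Fin (n + 1)) ℝ :=
  eta n * Λᵀ * eta n

/-- The quantity `ρ = (p⁰+q⁰)/√s` appearing in the boost matrix. -/
def rhoB (n : ℕ) (c : ℝ) (p q : EuclideanSpace ℝ (Fin n)) : ℝ :=
  (energy n c p + energy n c q) / Real.sqrt (sQ n c p q)

/-- The boost matrix `Λ_b = [[ρ, −ρ vᵀ], [−ρ v, Iₙ + (ρ−1) v vᵀ/|v|²]]`
with `v = (p+q)/(p⁰+q⁰)`. -/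
def boost (n : ℕ) (c : ℝ) (p q : EuclideanSpace ℝ (Fin n)) :
    Matrix (Fin (n + 1)) (Fin (n + 1)) ℝ :=
  Matrix.of fun μ ν =>
    Fin.cases
      (Fin.cases (rhoB n c p q)
        (fun j => -rhoB n c p q * ((p j + q j) / (energy n c p + energy n c q))) ν)
      (fun i =>
        Fin.cases (-rhoB n c p q * ((p i + q i) / (energy n c p + energy n c q)))
          (fun j =>
            (if i = j then (1 : ℝ) else 0) +
              (rhoB n c p q - 1) *
                ((p i + q i) / (energy n c p + energy n c q)) *
                ((p j + q j) / (energy n c p + energy n c q)) /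
                (∑ k, ((p k + q k) / (energy n c p + energy n c q)) ^ 2)) ν) μ

/-- The vector `k ∈ ℝⁿ`, `k^i = Λ^i_μ (p^μ − q^μ)` (spatial rows of `Λ` applied
to `p^μ − q^μ`). -/
def kvec (n : ℕ) (c : ℝ) (Λ : Matrix (Fin (n + 1)) (Fin (n + 1)) ℝ)
    (p q : EuclideanSpace ℝ (Fin n)) : EuclideanSpace ℝ (Fin n) :=
  WithLp.toLp 2 fun (i : Fin n) => Λ.mulVec (fourVec n c p - fourVec n c q) i.succ

/-- `ω̄^μ = (√s/2, (ϱ/2)ω)`. -/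
def wbar (n : ℕ) (c : ℝ) (p q ω : EuclideanSpace ℝ (Fin n)) : Fin (n + 1) → ℝ :=
  Fin.cons (Real.sqrt (sQ n c p q) / 2) fun i => (relMom n c p q / 2) * ω i

/-- `ω̃^μ = (√s/2, −(ϱ/2)ω)`. -/
def wtil (n : ℕ) (c : ℝ) (p q ω : EuclideanSpace ℝ (Fin n)) : Fin (n + 1) → ℝ :=
  Fin.cons (Real.sqrt (sQ n c p q) / 2) fun i => -(relMom n c p q / 2) * ω i

/-- The center-of-momentum post-collisional four-vector `p′^μ = (Λ⁻¹)^μ_ν ω̄^ν`. -/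
def postP (n : ℕ) (c : ℝ) (Λ : Matrix (Fin (n + 1)) (Fin (n + 1)) ℝ)
    (p q ω : EuclideanSpace ℝ (Fin n)) : Fin (n + 1) → ℝ :=
  (Linv n Λ).mulVec (wbar n c p q ω)

/-- The center-of-momentum post-collisional four-vector `q′^μ = (Λ⁻¹)^μ_ν ω̃^ν`. -/
def postQ (n : ℕ) (c : ℝ) (Λ : Matrix (Fin (n + 1)) (Fin (n + 1)) ℝ)
    (p q ω : EuclideanSpace ℝ (Fin n)) : Fin (n + 1) → ℝ :=
  (Linv n Λ).mulVec (wtil n c p q ω)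

/-- The spatial part of a vector in `ℝ^{1+n}`. -/
def spat (n : ℕ) (u : Fin (n + 1) → ℝ) : EuclideanSpace ℝ (Fin n) :=
  WithLp.toLp 2 fun (i : Fin n) => u i.succ

/-- `D₁ = (p⁰+q⁰)² − (ω·(p+q))²`. -/
def D1 (n : ℕ) (c : ℝ) (p q ω : EuclideanSpace ℝ (Fin n)) : ℝ :=
  (energy n c p + energy n c q) ^ 2 - dot n ω (p + q) ^ 2

/-- `D₂ = (p⁰+q⁰){ω·(p⁰q − q⁰p)}`. -/
def D2 (n : ℕ) (c : ℝ) (p q ω : EuclideanSpace ℝ (Fin n)) : ℝ :=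
  (energy n c p + energy n c q) * dot n ω (energy n c p • q - energy n c q • p)

/-- `a(p,q,ω) = 2(p⁰+q⁰){ω·(p⁰q − q⁰p)}/D₁`. -/
def aGS (n : ℕ) (c : ℝ) (p q ω : EuclideanSpace ℝ (Fin n)) : ℝ :=
  2 * (energy n c p + energy n c q) * dot n ω (energy n c p • q - energy n c q • p) /
    D1 n c p q ω

/-- `N⁰(p,q,ω) = 2{ω·(p+q)}{ω·(p⁰q − q⁰p)}/D₁`. -/
def N0 (n : ℕ) (c : ℝ) (p q ω : EuclideanSpace ℝ (Fin n)) : ℝ :=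
  2 * dot n ω (p + q) * dot n ω (energy n c p • q - energy n c q • p) / D1 n c p q ω

/-- The Glassey–Strauss post-collisional momentum `p′ = p + a(p,q,ω)ω`. -/
def gsP (n : ℕ) (c : ℝ) (p q ω : EuclideanSpace ℝ (Fin n)) : EuclideanSpace ℝ (Fin n) :=
  p + aGS n c p q ω • ω

/-- The Glassey–Strauss post-collisional momentum `q′ = q − a(p,q,ω)ω`. -/
def gsQ (n : ℕ) (c : ℝ) (p q ω : EuclideanSpace ℝ (Fin n)) : EuclideanSpace ℝ (Fin n) :=
  q - aGS n c p q ω • ω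

/-- The Glassey–Strauss kernel `B(p,q,ω)`. -/
def BGS (n : ℕ) (c : ℝ) (p q ω : EuclideanSpace ℝ (Fin n)) : ℝ :=
  c * (energy n c p + energy n c q) ^ 2 * energy n c p * energy n c q *
    |dot n ω ((energy n c p)⁻¹ • p - (energy n c q)⁻¹ • q)| / D1 n c p q ω ^ 2

/-- The dimensional factor `A(p,q,ω)`. -/
def AGS (n : ℕ) (c : ℝ) (p q ω : EuclideanSpace ℝ (Fin n)) : ℝ :=
  (4 / relMom n c p q) * (energy n c p + energy n c q) * energy n c p * energy n c q *
    |dot n ω ((energy n c p)⁻¹ • p - (energy n c q)⁻¹ • q)| / D1 n c p q ω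

/-- The dimensional Glassey–Strauss kernel `B_n(p,q,ω) = B(p,q,ω)·(A(p,q,ω))^{n−3}`. -/
def Bn (n : ℕ) (c : ℝ) (p q ω : EuclideanSpace ℝ (Fin n)) : ℝ :=
  BGS n c p q ω * AGS n c p q ω ^ ((n : ℤ) - 3)

/-- The Møller velocity `v_ø(p,q) = (c/4) ϱ √s / (p⁰q⁰)`. -/
def moller (n : ℕ) (c : ℝ) (p q : EuclideanSpace ℝ (Fin n)) : ℝ :=
  (c / 4) * relMom n c p q * Real.sqrt (sQ n c p q) / (energy n c p * energy n c q)

/-- The explicit boost form of the combination appearing in the center-of-momentum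
post-collisional momenta. -/
def cmDir (n : ℕ) (c : ℝ) (p q ω : EuclideanSpace ℝ (Fin n)) : EuclideanSpace ℝ (Fin n) :=
  ω + ((rhoB n c p q - 1) * dot n (p + q) ω / ‖p + q‖ ^ 2) • (p + q)

/-- The explicit boost form of the center-of-momentum post-collisional momentum `p′`. -/
def cmP (n : ℕ) (c : ℝ) (p q ω : EuclideanSpace ℝ (Fin n)) : EuclideanSpace ℝ (Fin n) :=
  (1 / 2 : ℝ) • (p + q) + (relMom n c p q / 2) • cmDir n c p q ω

/-- The explicit boost form of the center-of-momentum post-collisional momentum `q′`. -/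
def cmQ (n : ℕ) (c : ℝ) (p q ω : EuclideanSpace ℝ (Fin n)) : EuclideanSpace ℝ (Fin n) :=
  (1 / 2 : ℝ) • (p + q) - (relMom n c p q / 2) • cmDir n c p q ω

/-- The explicit boost form of the vector `k`. -/
def kB (n : ℕ) (c : ℝ) (p q : EuclideanSpace ℝ (Fin n)) : EuclideanSpace ℝ (Fin n) :=
  (-(energy n c p - energy n c q) / Real.sqrt (sQ n c p q)) • (p + q) + (p - q) +
    ((rhoB n c p q - 1) * dot n (p + q) (p - q) / ‖p + q‖ ^ 2) • (p + q)

/-- The center-of-momentum scattering angle `cos θ_cm = (k/|k|)·ω`. -/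
def cosCM (n : ℕ) (c : ℝ) (p q ω : EuclideanSpace ℝ (Fin n)) : ℝ :=
  dot n (kB n c p q) ω / ‖kB n c p q‖

/-- The Glassey–Strauss scattering angle
`cos θ_gs = 1 − 8{ω·(p⁰q − q⁰p)}²/(D₁ϱ²)`. -/
def cosGS (n : ℕ) (c : ℝ) (p q ω : EuclideanSpace ℝ (Fin n)) : ℝ :=
  1 - 8 * dot n ω (energy n c p • q - energy n c q • p) ^ 2 /
    (D1 n c p q ω * relMom n c p q ^ 2)

/-- The surface measure on the unit sphere `S^{n−1} ⊂ ℝⁿ`. -/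
def sphMeasure (n : ℕ) : Measure (sphere (0 : EuclideanSpace ℝ (Fin n)) 1) :=
  (volume : Measure (EuclideanSpace ℝ (Fin n))).toSphere

open scoped RealInnerProductSpace

-- auxiliary lemmas
lemma dot_eq_inner (n : ℕ) (p q : EuclideanSpace ℝ (Fin n)) : dot n p q = ⟪p, q⟫ := by
  simp [dot, PiLp.inner_apply, RCLike.inner_apply, mul_comm]

lemma energy_pos (n : ℕ) (c : ℝ) (hc : 0 < c) (p : EuclideanSpace ℝ (Fin n)) :
    0 < energy n c p :=
  Real.sqrt_pos.mpr (by positivity)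

lemma energy_sq (n : ℕ) (c : ℝ) (p : EuclideanSpace ℝ (Fin n)) :
    energy n c p ^ 2 = c ^ 2 + ‖p‖ ^ 2 :=
  Real.sq_sqrt (by positivity)

lemma dot_sq_le (n : ℕ) (p ω : EuclideanSpace ℝ (Fin n)) (hω : ‖ω‖ = 1) :
    dot n ω p ^ 2 ≤ ‖p‖ ^ 2 := by
  rw [dot_eq_inner]
  have h := abs_real_inner_le_norm ω p
  rw [hω, one_mul] at h
  calc ⟪ω, p⟫ ^ 2 = |⟪ω, p⟫| ^ 2 := (sq_abs _).symm
    _ ≤ ‖p‖ ^ 2 := pow_le_pow_left₀ (abs_nonneg _) h 2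

lemma dot_add_right (n : ℕ) (ω p q : EuclideanSpace ℝ (Fin n)) :
    dot n ω (p + q) = dot n ω p + dot n ω q := by
  simp [dot, mul_add, Finset.sum_add_distrib]

lemma dot_smul_sub (n : ℕ) (a b : ℝ) (ω p q : EuclideanSpace ℝ (Fin n)) :
    dot n ω (a • p - b • q) = a * dot n ω p - b * dot n ω q := by
  simp [dot, mul_sub, Finset.sum_sub_distrib, mul_comm, mul_left_comm, Finset.mul_sum]

lemma norm_add_smul_sq (n : ℕ) (a : ℝ) (p ω : EuclideanSpace ℝ (Fin n)) (hω : ‖ω‖ = 1) :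
    ‖p + a • ω‖ ^ 2 = ‖p‖ ^ 2 + 2 * a * dot n ω p + a ^ 2 := by
  rw [norm_add_sq_real]
  have h : ⟪p, a • ω⟫ = a * dot n ω p := by
    rw [real_inner_smul_right, dot_eq_inner, real_inner_comm]
  rw [h, norm_smul]
  simp [hω, mul_pow]
  ring

lemma norm_sub_smul_sq (n : ℕ) (a : ℝ) (p ω : EuclideanSpace ℝ (Fin n)) (hω : ‖ω‖ = 1) :
    ‖p - a • ω‖ ^ 2 = ‖p‖ ^ 2 - 2 * a * dot n ω p + a ^ 2 := by
  rw [norm_sub_sq_real]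
  have h : ⟪p, a • ω⟫ = a * dot n ω p := by
    rw [real_inner_smul_right, dot_eq_inner, real_inner_comm]
  rw [h, norm_smul]
  simp [hω, mul_pow]
  ring

lemma relboltz_aux (c P Q α β : ℝ) (hc : 0 < c) (hP : 0 < P) (hQ : 0 < Q)
    (hα : α ^ 2 ≤ P ^ 2 - c ^ 2) (hβ : β ^ 2 ≤ Q ^ 2 - c ^ 2) :
    0 < (P + Q) ^ 2 - (α + β) ^ 2 ∧
    0 ≤ P * ((P + Q) ^ 2 - (α + β) ^ 2) + 2 * (α + β) * (P * β - Q * α) ∧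
    0 ≤ Q * ((P + Q) ^ 2 - (α + β) ^ 2) - 2 * (α + β) * (P * β - Q * α) := by
  have hc2 : 0 < c ^ 2 := by positivity
  have hαP : α < P := by nlinarith
  have hαP' : -P < α := by nlinarith
  have hβQ : β < Q := by nlinarith
  have hβQ' : -Q < β := by nlinarith
  have hPQ : c ^ 2 ≤ P * Q := by nlinarith
  have h1 : (α * β) ^ 2 ≤ (P ^ 2 - c ^ 2) * (Q ^ 2 - c ^ 2) := by
    rw [mul_pow]
    exact mul_le_mul hα hβ (sq_nonneg β) (by nlinarith [sq_nonneg α])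
  have h2 : (P ^ 2 - c ^ 2) * (Q ^ 2 - c ^ 2) ≤ (P * Q - c ^ 2) ^ 2 := by
    nlinarith [sq_nonneg (P - Q)]
  have hab : α * β ≤ P * Q - c ^ 2 := by nlinarith [h1, h2]
  refine ⟨by nlinarith, ?_, ?_⟩
  · rcases le_or_gt 0 β with hb | hb
    · have key : P * ((P + Q) ^ 2 - (α + β) ^ 2) + 2 * (α + β) * (P * β - Q * α) =
          (P + 2 * Q) * (P ^ 2 - α ^ 2) + P * (Q - β) ^ 2 + 2 * Q * β * (P - α) := by ring
      rw [key]
      have t1 : 0 ≤ (P + 2 * Q) * (P ^ 2 - α ^ 2) :=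
        mul_nonneg (by linarith) (by linarith)
      have t2 : 0 ≤ P * (Q - β) ^ 2 := mul_nonneg hP.le (sq_nonneg _)
      have t3 : 0 ≤ 2 * Q * β * (P - α) :=
        mul_nonneg (mul_nonneg (by linarith) hb) (by linarith)
      linarith
    · have key : P * ((P + Q) ^ 2 - (α + β) ^ 2) + 2 * (α + β) * (P * β - Q * α) =
          (P + 2 * Q) * (P ^ 2 - α ^ 2) + P * (Q + β) ^ 2 + 2 * Q * (-β) * (P + α) := by ring
      rw [key]
      have t1 : 0 ≤ (P + 2 * Q) * (P ^ 2 - α ^ 2) :=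
        mul_nonneg (by linarith) (by linarith)
      have t2 : 0 ≤ P * (Q + β) ^ 2 := mul_nonneg hP.le (sq_nonneg _)
      have t3 : 0 ≤ 2 * Q * (-β) * (P + α) :=
        mul_nonneg (mul_nonneg (by linarith) (by linarith)) (by linarith)
      linarith
  · rcases le_or_gt 0 α with ha' | ha'
    · have key : Q * ((P + Q) ^ 2 - (α + β) ^ 2) - 2 * (α + β) * (P * β - Q * α) =
          (Q + 2 * P) * (Q ^ 2 - β ^ 2) + Q * (P - α) ^ 2 + 2 * P * α * (Q - β) := by ring
      rw [key]
      have t1 : 0 ≤ (Q + 2 * P) * (Q ^ 2 - β ^ 2) :=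
        mul_nonneg (by linarith) (by linarith)
      have t2 : 0 ≤ Q * (P - α) ^ 2 := mul_nonneg hQ.le (sq_nonneg _)
      have t3 : 0 ≤ 2 * P * α * (Q - β) :=
        mul_nonneg (mul_nonneg (by linarith) ha') (by linarith)
      linarith
    · have key : Q * ((P + Q) ^ 2 - (α + β) ^ 2) - 2 * (α + β) * (P * β - Q * α) =
          (Q + 2 * P) * (Q ^ 2 - β ^ 2) + Q * (P + α) ^ 2 + 2 * P * (-α) * (Q + β) := by ring
      rw [key]
      have t1 : 0 ≤ (Q + 2 * P) * (Q ^ 2 - β ^ 2) :=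
        mul_nonneg (by linarith) (by linarith)
      have t2 : 0 ≤ Q * (P + α) ^ 2 := mul_nonneg hQ.le (sq_nonneg _)
      have t3 : 0 ≤ 2 * P * (-α) * (Q + β) :=
        mul_nonneg (mul_nonneg (by linarith) (by linarith)) (by linarith)
      linarith


set_option maxHeartbeats 1000000 in
/-- the Glassey–Strauss post-collisional momenta satisfy
`p′⁰ = p⁰ + N⁰` and `q′⁰ = q⁰ − N⁰`, and the collisional conservation laws hold. -/
theorem statement12 (n : ℕ) (hn : 2 ≤ n) (c : ℝ) (hc : 0 < c)
    (p q : EuclideanSpace ℝ (Fin n)) (ω : EuclideanSpace ℝ (Fin n)) (hω : ‖ω‖ = 1) :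
    energy n c (gsP n c p q ω) = energy n c p + N0 n c p q ω ∧
    energy n c (gsQ n c p q ω) = energy n c q - N0 n c p q ω ∧
    gsP n c p q ω + gsQ n c p q ω = p + q ∧
    energy n c (gsP n c p q ω) + energy n c (gsQ n c p q ω) =
      energy n c p + energy n c q := by
  set P := energy n c p with hPdef
  set Q := energy n c q with hQdef
  set α := dot n ω p with hαdef
  set β := dot n ω q with hβdef
  have hP : 0 < P := energy_pos n c hc p
  have hQ : 0 < Q := energy_pos n c hc q
  have hP2 : P ^ 2 = c ^ 2 + ‖p‖ ^ 2 := energy_sq n c p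
  have hQ2 : Q ^ 2 = c ^ 2 + ‖q‖ ^ 2 := energy_sq n c q
  have hc2 : 0 < c ^ 2 := by positivity
  have hα : α ^ 2 ≤ P ^ 2 - c ^ 2 := by
    have := dot_sq_le n p ω hω; linarith
  have hβ : β ^ 2 ≤ Q ^ 2 - c ^ 2 := by
    have := dot_sq_le n q ω hω; linarith
  obtain ⟨hDpos, hnum1', hnum2'⟩ := relboltz_aux c P Q α β hc hP hQ hα hβ
  have hdotsum : dot n ω (p + q) = α + β := dot_add_right n ω p q
  have hdotm : dot n ω (P • q - Q • p) = P * β - Q * α := dot_smul_sub n P Q ω q p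
  have hD1 : D1 n c p q ω = (P + Q) ^ 2 - (α + β) ^ 2 := by
    rw [D1, hdotsum]
  have hDne : ((P + Q) ^ 2 - (α + β) ^ 2) ≠ 0 := ne_of_gt hDpos
  set M := P * β - Q * α with hMdef
  have ha : aGS n c p q ω = 2 * (P + Q) * M / ((P + Q) ^ 2 - (α + β) ^ 2) := by
    rw [aGS, hD1, hdotm]
  have hN : N0 n c p q ω = 2 * (α + β) * M / ((P + Q) ^ 2 - (α + β) ^ 2) := by
    rw [N0, hD1, hdotsum, hdotm]
  -- energy of gsP
  have hnp : ‖p‖ ^ 2 = P ^ 2 - c ^ 2 := by linarith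
  have hnq : ‖q‖ ^ 2 = Q ^ 2 - c ^ 2 := by linarith
  have hsqP : c ^ 2 + ‖gsP n c p q ω‖ ^ 2 = (P + N0 n c p q ω) ^ 2 := by
    rw [gsP, norm_add_smul_sq n _ p ω hω, ha, hN, hnp, ← hαdef]
    field_simp
    ring
  have hsqQ : c ^ 2 + ‖gsQ n c p q ω‖ ^ 2 = (Q - N0 n c p q ω) ^ 2 := by
    rw [gsQ, norm_sub_smul_sq n _ q ω hω, ha, hN, hnq, ← hβdef]
    field_simp
    ring
  have hnum1 : 0 ≤ P * ((P + Q) ^ 2 - (α + β) ^ 2) + 2 * (α + β) * M := by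
    rw [hMdef]; exact hnum1'
  have hnum2 : 0 ≤ Q * ((P + Q) ^ 2 - (α + β) ^ 2) - 2 * (α + β) * M := by
    rw [hMdef]; exact hnum2'
  have hge1 : 0 ≤ P + N0 n c p q ω := by
    rw [hN]
    have : P + 2 * (α + β) * M / ((P + Q) ^ 2 - (α + β) ^ 2) =
        (P * ((P + Q) ^ 2 - (α + β) ^ 2) + 2 * (α + β) * M) / ((P + Q) ^ 2 - (α + β) ^ 2) := by
      field_simp
    rw [this]
    exact div_nonneg hnum1 hDpos.le
  have hge2 : 0 ≤ Q - N0 n c p q ω := by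
    rw [hN]
    have : Q - 2 * (α + β) * M / ((P + Q) ^ 2 - (α + β) ^ 2) =
        (Q * ((P + Q) ^ 2 - (α + β) ^ 2) - 2 * (α + β) * M) / ((P + Q) ^ 2 - (α + β) ^ 2) := by
      field_simp
    rw [this]
    exact div_nonneg hnum2 hDpos.le
  have e1 : energy n c (gsP n c p q ω) = P + N0 n c p q ω := by
    rw [energy, hsqP, Real.sqrt_sq hge1]
  have e2 : energy n c (gsQ n c p q ω) = Q - N0 n c p q ω := by
    rw [energy, hsqQ, Real.sqrt_sq hge2]
  refine ⟨e1, e2, ?_, by rw [e1, e2]; ring⟩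
  rw [gsP, gsQ]
  abel

end RelBoltz
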